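/- The endomorphisms R_q, L_q, E_q of the Weyl algebra W_{2d}, defined by R_q w = (1-q)² Σ_j a_j w a_j⁺ + q(1-q) Σ_j (w a_j⁺ a_j + a_j a_j⁺ w) + q² Σ_j a_j⁺ w a_j, L_q w = -Σ_j [a_j, [a_j⁺, w]], and E_q w = -Σ_j {(1-q)(a_j[a_j⁺,w] - [a_j,w]a_j⁺) + q([a_j⁺,w]a_j - a_j⁺[a_j,w])} + d·w, satisfy the sl₂ commutation relations [R_q, L_q] = -E_q, [E_q, R_q] = 2R_q, [E_q, L_q] = -2L_q. -/

import Mathlib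

namespace Stmt6Aux
variable {W : Type*} [Ring W] [Algebra ℂ W]

noncomputable def lmw (x : W) : Module.End ℂ W := LinearMap.mulLeft ℂ x
noncomputable def rmw (x : W) : Module.End ℂ W := LinearMap.mulRight ℂ x

@[simp] lemma lmw_apply (x w : W) : lmw x w = x * w := rfl
@[simp] lemma rmw_apply (x w : W) : rmw x w = w * x := rfl

lemma lmw_comm {x y : W} (h : x * y = y * x) : lmw y * lmw x = lmw x * lmw y := by
  ext w
  simp only [Module.End.mul_apply, lmw_apply]
  rw [← mul_assoc, ← mul_assoc, h]

lemma rmw_comm {x y : W} (h : x * y = y * x) : rmw y * rmw x = rmw x * rmw y := by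
  ext w
  simp only [Module.End.mul_apply, rmw_apply]
  rw [mul_assoc, mul_assoc, h]

lemma rmw_lmw (x y : W) : rmw y * lmw x = lmw x * rmw y := by
  ext w
  simp [mul_assoc]

lemma lmw_swap {x y ε : W} (h : x * y - y * x = ε) : lmw y * lmw x = lmw x * lmw y - lmw ε := by
  have h' : x * y = y * x + ε := by rw [← h]; abel
  ext w
  simp only [Module.End.mul_apply, LinearMap.sub_apply, lmw_apply]
  rw [eq_sub_iff_add_eq, ← mul_assoc x y w, h', add_mul, mul_assoc]

lemma rmw_swap {x y ε : W} (h : x * y - y * x = ε) : rmw y * rmw x = rmw x * rmw y + rmw ε := by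
  have h' : x * y = y * x + ε := by rw [← h]; abel
  ext w
  simp only [Module.End.mul_apply, LinearMap.add_apply, rmw_apply]
  rw [mul_assoc, h', mul_add, ← mul_assoc]

noncomputable def Bv (v : ℂ) (x : W) : Module.End ℂ W := (1 - v) • lmw x + v • rmw x
noncomputable def Bv' (v : ℂ) (x : W) : Module.End ℂ W := (1 - v) • rmw x + v • lmw x
noncomputable def Cv (x : W) : Module.End ℂ W := lmw x - rmw x

lemma comm_B_B (v : ℂ) {x y : W} (h : x * y = y * x) :
    Bv v x * Bv v y - Bv v y * Bv v x = 0 := by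
  simp only [Bv, add_mul, mul_add, sub_mul, mul_sub, smul_mul_assoc, mul_smul_comm, smul_smul,
    smul_add, smul_sub]
  rw [lmw_comm h, rmw_comm h, rmw_lmw x y, rmw_lmw y x]
  module

lemma comm_B'_B' (v : ℂ) {x y : W} (h : x * y = y * x) :
    Bv' v x * Bv' v y - Bv' v y * Bv' v x = 0 := by
  simp only [Bv', add_mul, mul_add, sub_mul, mul_sub, smul_mul_assoc, mul_smul_comm, smul_smul,
    smul_add, smul_sub]
  rw [lmw_comm h, rmw_comm h, rmw_lmw x y, rmw_lmw y x]
  module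

lemma comm_B_B' (v : ℂ) {x y ε : W} (h : x * y - y * x = ε) (hε : lmw ε = rmw ε) :
    Bv v x * Bv' v y - Bv' v y * Bv v x = 0 := by
  simp only [Bv, Bv', add_mul, mul_add, sub_mul, mul_sub, smul_mul_assoc, mul_smul_comm, smul_smul,
    smul_add, smul_sub]
  rw [lmw_swap h, rmw_swap h, rmw_lmw x y, rmw_lmw y x, hε]
  module

lemma comm_C_C {x y : W} (h : x * y = y * x) : Cv x * Cv y - Cv y * Cv x = 0 := by
  simp only [Cv, add_mul, mul_add, sub_mul, mul_sub]
  rw [lmw_comm h, rmw_comm h, rmw_lmw x y, rmw_lmw y x]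
  abel

lemma comm_C_C' {x y ε : W} (h : x * y - y * x = ε) (hε : lmw ε = rmw ε) :
    Cv x * Cv y - Cv y * Cv x = 0 := by
  simp only [Cv, add_mul, mul_add, sub_mul, mul_sub]
  rw [lmw_swap h, rmw_swap h, rmw_lmw x y, rmw_lmw y x, hε]
  abel

lemma comm_B_C (v : ℂ) {x y : W} (h : x * y = y * x) :
    Bv v x * Cv y - Cv y * Bv v x = 0 := by
  simp only [Bv, Cv, add_mul, mul_add, sub_mul, mul_sub, smul_mul_assoc, mul_smul_comm, smul_smul,
    smul_add, smul_sub]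
  rw [lmw_comm h, rmw_comm h, rmw_lmw x y, rmw_lmw y x]
  module

lemma comm_B'_C' (v : ℂ) {x y : W} (h : x * y = y * x) :
    Bv' v x * Cv y - Cv y * Bv' v x = 0 := by
  simp only [Bv', Cv, add_mul, mul_add, sub_mul, mul_sub, smul_mul_assoc, mul_smul_comm, smul_smul,
    smul_add, smul_sub]
  rw [lmw_comm h, rmw_comm h, rmw_lmw x y, rmw_lmw y x]
  module

lemma comm_B_C' (v : ℂ) {x y ε : W} (h : x * y - y * x = ε) (hε : lmw ε = rmw ε) :
    Bv v x * Cv y - Cv y * Bv v x = lmw ε := by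
  simp only [Bv, Cv, add_mul, mul_add, sub_mul, mul_sub, smul_mul_assoc, mul_smul_comm, smul_smul,
    smul_add, smul_sub]
  rw [lmw_swap h, rmw_swap h, rmw_lmw x y, rmw_lmw y x, hε]
  module

lemma comm_C_B' (v : ℂ) {x y ε : W} (h : x * y - y * x = ε) (hε : lmw ε = rmw ε) :
    Cv x * Bv' v y - Bv' v y * Cv x = lmw ε := by
  simp only [Bv', Cv, add_mul, mul_add, sub_mul, mul_sub, smul_mul_assoc, mul_smul_comm, smul_smul,
    smul_add, smul_sub]
  rw [lmw_swap h, rmw_swap h, rmw_lmw x y, rmw_lmw y x, hε]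
  module

end Stmt6Aux
namespace Stmt6Aux
variable {W : Type*} [Ring W] [Algebra ℂ W]

@[simp] lemma lmw_one : lmw (1:W) = 1 := by ext w; simp
@[simp] lemma lmw_zero : lmw (0:W) = 0 := by ext w; simp
@[simp] lemma rmw_one : rmw (1:W) = 1 := by ext w; simp
@[simp] lemma rmw_zero : rmw (0:W) = 0 := by ext w; simp

end Stmt6Aux

lemma leib {R : Type*} [Ring R] (x y z w : R) :
    x * y * (z * w) - z * w * (x * y) =
      x * ((y * z - z * y) * w) + x * (z * (y * w - w * y)) +
      (x * z - z * x) * w * y + z * (x * w - w * x) * y := by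
  noncomm_ring

lemma comm_sum {R : Type*} [Ring R] {d : ℕ} (P Q Z : Fin d → R)
    (h : ∀ j k, P j * Q k - Q k * P j = if j = k then Z j else 0) :
    (∑ j, P j) * (∑ k, Q k) - (∑ k, Q k) * (∑ j, P j) = ∑ j, Z j := by
  rw [Finset.sum_mul_sum, Finset.sum_mul_sum,
    Finset.sum_comm (s := Finset.univ) (t := Finset.univ) (f := fun k j => Q k * P j),
    ← Finset.sum_sub_distrib]
  refine Finset.sum_congr rfl fun j _ => ?_
  rw [← Finset.sum_sub_distrib]
  simp only [h]
  simp
lemma gp1 {R : Type*} [Ring R] (x y z w : R) :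
    x * (-1 * w) + x * (z * 0) + 0 * w * y + z * 1 * y = z * y - x * w := by noncomm_ring
lemma gp2 {R : Type*} [Ring R] (x y z w : R) :
    x * (-1 * w) + x * (z * 0) + 0 * w * y + z * 0 * y = -(x * w) := by noncomm_ring
lemma gp5 {R : Type*} [Ring R] (x y z w : R) (h : y * w = w * y) :
    x * (0 * w) + x * (z * 0) + -1 * w * y + z * 0 * y = -(y * w) := by rw [h]; noncomm_ring
lemma gexp {R : Type*} [Ring R] (X Y P : R) :
    (X - Y) * P - P * (X - Y) = (X * P - P * X) - (Y * P - P * Y) := by noncomm_ring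
lemma gg1 {R : Type*} [Ring R] : ∀ A L : R, A * -L - -L * A = -(A * L - L * A) := by
  intros; noncomm_ring
lemma gg2 {R : Type*} [Ring R] : ∀ F A G : R, (-F + G) * A - A * (-F + G) =
    (A * F - F * A) + (G * A - A * G) := by intros; noncomm_ring
lemma gg3 {R : Type*} [Ring R] : ∀ F L G : R, (-F + G) * -L - -L * (-F + G) =
    (F * L - L * F) + (L * G - G * L) := by intros; noncomm_ring
open Stmt6Aux

/-- The endomorphisms `R_q, L_q, E_q` of the Weyl algebra `W_{2d}`, given by
`R_q w = (1-q)² Σ_j a_j w a_j⁺ + q(1-q) Σ_j (w a_j⁺ a_j + a_j a_j⁺ w) + q² Σ_j a_j⁺ w a_j`,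
`L_q w = -Σ_j [a_j, [a_j⁺, w]]`, and
`E_q w = -Σ_j {(1-q)(a_j[a_j⁺,w] - [a_j,w]a_j⁺) + q([a_j⁺,w]a_j - a_j⁺[a_j,w])} + d·w`,
satisfy the `sl₂` commutation relations `[R_q, L_q] = -E_q`, `[E_q, R_q] = 2R_q`,
`[E_q, L_q] = -2L_q`. -/
theorem stmt6 {W : Type*} [Ring W] [Algebra ℂ W] (d : ℕ) (a ap : Fin d → W)
    (hccr : ∀ j k, a j * ap k - ap k * a j = if j = k then 1 else 0)
    (haa : ∀ j k, a j * a k = a k * a j)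
    (hpp : ∀ j k, ap j * ap k = ap k * ap j)
    (q : ℝ) (hq : q ∈ Set.Icc (0 : ℝ) 1)
    (Rq Lq Eq : Module.End ℂ W)
    (hRq : ∀ w, Rq w =
      ((1 - q : ℝ) : ℂ) ^ 2 • ∑ j, a j * w * ap j +
      ((q : ℂ) * ((1 - q : ℝ) : ℂ)) • ∑ j, (w * ap j * a j + a j * ap j * w) +
      (q : ℂ) ^ 2 • ∑ j, ap j * w * a j)
    (hLq : ∀ w, Lq w = -∑ j, (a j * (ap j * w - w * ap j) - (ap j * w - w * ap j) * a j))
    (hEq : ∀ w, Eq w =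
      -∑ j, (((1 - q : ℝ) : ℂ) • (a j * (ap j * w - w * ap j) - (a j * w - w * a j) * ap j) +
             (q : ℂ) • ((ap j * w - w * ap j) * a j - ap j * (a j * w - w * a j))) +
      (d : ℂ) • w) :
    Rq * Lq - Lq * Rq = -Eq ∧
    Eq * Rq - Rq * Eq = (2 : ℂ) • Rq ∧
    Eq * Lq - Lq * Eq = -((2 : ℂ) • Lq) := by
  classical
  -- applied forms of the e operator
  have hE1 : ∀ j k : Fin d, lmw (W := W) (if j = k then (1:W) else 0)
      = rmw (if j = k then (1:W) else 0) := by
    intro j k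
    by_cases h : j = k <;> simp [h]
  -- identification of the three operators
  have hRsum : Rq = ∑ j, Bv (q:ℂ) (a j) * Bv' (q:ℂ) (ap j) := by
    apply LinearMap.ext; intro w
    rw [hRq, LinearMap.sum_apply]
    rw [Finset.smul_sum, Finset.smul_sum, Finset.smul_sum, ← Finset.sum_add_distrib,
      ← Finset.sum_add_distrib]
    refine Finset.sum_congr rfl fun j _ => ?_
    simp only [Module.End.mul_apply, Bv, Bv', LinearMap.add_apply, LinearMap.smul_apply,
      lmw_apply, rmw_apply]
    push_cast
    simp only [mul_add, add_mul, smul_add, smul_smul, mul_smul_comm, smul_mul_assoc, mul_assoc]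
    module
  have hLsum : Lq = -∑ j, Cv (a j) * Cv (ap j) := by
    apply LinearMap.ext; intro w
    rw [hLq]
    simp only [LinearMap.neg_apply, LinearMap.sum_apply, Module.End.mul_apply, Cv,
      LinearMap.sub_apply, lmw_apply, rmw_apply]
  have hEsum : Eq = -∑ j, (Bv (q:ℂ) (a j) * Cv (ap j) - Bv' (q:ℂ) (ap j) * Cv (a j))
      + (d:ℂ) • 1 := by
    apply LinearMap.ext; intro w
    rw [hEq]
    simp only [LinearMap.add_apply, LinearMap.neg_apply, LinearMap.sum_apply,
      Module.End.mul_apply, LinearMap.sub_apply, LinearMap.smul_apply, Bv, Bv', Cv,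
      lmw_apply, rmw_apply, Module.End.one_apply]
    push_cast
    congr 2
    refine Finset.sum_congr rfl fun j _ => ?_
    simp only [smul_sub]
    module
  -- the five pairwise commutators
  have pair1 : ∀ j k : Fin d,
      (Bv (q:ℂ) (a j) * Bv' (q:ℂ) (ap j)) * (Cv (a k) * Cv (ap k)) -
      (Cv (a k) * Cv (ap k)) * (Bv (q:ℂ) (a j) * Bv' (q:ℂ) (ap j)) =
      if j = k then Cv (a j) * Bv' (q:ℂ) (ap j) - Bv (q:ℂ) (a j) * Cv (ap j) else 0 := by
    intro j k
    rw [leib]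
    rw [show Bv' (q:ℂ) (ap j) * Cv (a k) - Cv (a k) * Bv' (q:ℂ) (ap j)
        = -(lmw (if k = j then (1:W) else 0)) from by
      rw [← neg_sub, comm_C_B' (q:ℂ) (hccr k j) (hE1 k j)]]
    rw [show Bv' (q:ℂ) (ap j) * Cv (ap k) - Cv (ap k) * Bv' (q:ℂ) (ap j) = 0 from
      comm_B'_C' _ (hpp j k)]
    rw [show Bv (q:ℂ) (a j) * Cv (a k) - Cv (a k) * Bv (q:ℂ) (a j) = 0 from
      comm_B_C _ (haa j k)]
    rw [comm_B_C' (q:ℂ) (hccr j k) (hE1 j k)]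
    by_cases h : j = k
    · subst h; rw [if_pos rfl, if_pos rfl, lmw_one]; exact gp1 _ _ _ _
    · simp [h, Ne.symm h]
  have pair2 : ∀ j k : Fin d,
      (Bv (q:ℂ) (a j) * Cv (ap j)) * (Bv (q:ℂ) (a k) * Bv' (q:ℂ) (ap k)) -
      (Bv (q:ℂ) (a k) * Bv' (q:ℂ) (ap k)) * (Bv (q:ℂ) (a j) * Cv (ap j)) =
      if j = k then -(Bv (q:ℂ) (a j) * Bv' (q:ℂ) (ap j)) else 0 := by
    intro j k
    rw [leib]
    rw [show Cv (ap j) * Bv (q:ℂ) (a k) - Bv (q:ℂ) (a k) * Cv (ap j)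
        = -(lmw (if k = j then (1:W) else 0)) from by
      rw [← neg_sub, comm_B_C' (q:ℂ) (hccr k j) (hE1 k j)]]
    rw [show Cv (ap j) * Bv' (q:ℂ) (ap k) - Bv' (q:ℂ) (ap k) * Cv (ap j) = 0 from by
      rw [← neg_sub, comm_B'_C' (q:ℂ) (hpp k j), neg_zero]]
    rw [show Bv (q:ℂ) (a j) * Bv (q:ℂ) (a k) - Bv (q:ℂ) (a k) * Bv (q:ℂ) (a j) = 0 from
      comm_B_B _ (haa j k)]
    rw [show Bv (q:ℂ) (a j) * Bv' (q:ℂ) (ap k) - Bv' (q:ℂ) (ap k) * Bv (q:ℂ) (a j) = 0 from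
      comm_B_B' _ (hccr j k) (hE1 j k)]
    by_cases h : j = k
    · subst h; rw [if_pos rfl, if_pos rfl, lmw_one]; exact gp2 _ _ _ _
    · simp [h, Ne.symm h]
  have pair3 : ∀ j k : Fin d,
      (Bv' (q:ℂ) (ap j) * Cv (a j)) * (Bv (q:ℂ) (a k) * Bv' (q:ℂ) (ap k)) -
      (Bv (q:ℂ) (a k) * Bv' (q:ℂ) (ap k)) * (Bv' (q:ℂ) (ap j) * Cv (a j)) =
      if j = k then Bv (q:ℂ) (a j) * Bv' (q:ℂ) (ap j) else 0 := by
    intro j k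
    rw [leib]
    rw [show Cv (a j) * Bv (q:ℂ) (a k) - Bv (q:ℂ) (a k) * Cv (a j) = 0 from by
      rw [← neg_sub, comm_B_C (q:ℂ) (haa k j), neg_zero]]
    rw [show Cv (a j) * Bv' (q:ℂ) (ap k) - Bv' (q:ℂ) (ap k) * Cv (a j)
        = lmw (if j = k then (1:W) else 0) from
      comm_C_B' (q:ℂ) (hccr j k) (hE1 j k)]
    rw [show Bv' (q:ℂ) (ap j) * Bv (q:ℂ) (a k) - Bv (q:ℂ) (a k) * Bv' (q:ℂ) (ap j) = 0 from by
      rw [← neg_sub, comm_B_B' (q:ℂ) (hccr k j) (hE1 k j), neg_zero]]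
    rw [show Bv' (q:ℂ) (ap j) * Bv' (q:ℂ) (ap k) - Bv' (q:ℂ) (ap k) * Bv' (q:ℂ) (ap j) = 0 from
      comm_B'_B' _ (hpp j k)]
    by_cases h : j = k
    · subst h
      have hcom := comm_B_B' (q:ℂ) (hccr j j) (hE1 j j)
      rw [sub_eq_zero] at hcom
      simp [hcom]
    · simp [h, Ne.symm h]
  have pair4 : ∀ j k : Fin d,
      (Bv (q:ℂ) (a j) * Cv (ap j)) * (Cv (a k) * Cv (ap k)) -
      (Cv (a k) * Cv (ap k)) * (Bv (q:ℂ) (a j) * Cv (ap j)) =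
      if j = k then Cv (a j) * Cv (ap j) else 0 := by
    intro j k
    rw [leib]
    rw [show Cv (ap j) * Cv (a k) - Cv (a k) * Cv (ap j) = 0 from by
      rw [← neg_sub, comm_C_C' (hccr k j) (hE1 k j), neg_zero]]
    rw [show Cv (ap j) * Cv (ap k) - Cv (ap k) * Cv (ap j) = 0 from comm_C_C (hpp j k)]
    rw [show Bv (q:ℂ) (a j) * Cv (a k) - Cv (a k) * Bv (q:ℂ) (a j) = 0 from
      comm_B_C _ (haa j k)]
    rw [comm_B_C' (q:ℂ) (hccr j k) (hE1 j k)]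
    by_cases h : j = k
    · subst h; simp
    · simp [h, Ne.symm h]
  have pair5 : ∀ j k : Fin d,
      (Bv' (q:ℂ) (ap j) * Cv (a j)) * (Cv (a k) * Cv (ap k)) -
      (Cv (a k) * Cv (ap k)) * (Bv' (q:ℂ) (ap j) * Cv (a j)) =
      if j = k then -(Cv (a j) * Cv (ap j)) else 0 := by
    intro j k
    rw [leib]
    rw [show Cv (a j) * Cv (a k) - Cv (a k) * Cv (a j) = 0 from comm_C_C (haa j k)]
    rw [show Cv (a j) * Cv (ap k) - Cv (ap k) * Cv (a j) = 0 from
      comm_C_C' (hccr j k) (hE1 j k)]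
    rw [show Bv' (q:ℂ) (ap j) * Cv (a k) - Cv (a k) * Bv' (q:ℂ) (ap j)
        = -(lmw (if k = j then (1:W) else 0)) from by
      rw [← neg_sub, comm_C_B' (q:ℂ) (hccr k j) (hE1 k j)]]
    rw [show Bv' (q:ℂ) (ap j) * Cv (ap k) - Cv (ap k) * Bv' (q:ℂ) (ap j) = 0 from
      comm_B'_C' _ (hpp j k)]
    by_cases h : j = k
    · subst h
      have hcom := comm_C_C' (hccr j j) (hE1 j j)
      rw [sub_eq_zero] at hcom
      rw [if_pos rfl, if_pos rfl, lmw_one]; exact gp5 _ _ _ _ hcom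
    · simp [h, Ne.symm h]
  -- summed commutators
  have key1 : (∑ j, Bv (q:ℂ) (a j) * Bv' (q:ℂ) (ap j)) * (∑ j, Cv (a j) * Cv (ap j)) - (∑ j, Cv (a j) * Cv (ap j)) * (∑ j, Bv (q:ℂ) (a j) * Bv' (q:ℂ) (ap j)) =
      ∑ j, (Cv (a j) * Bv' (q:ℂ) (ap j) - Bv (q:ℂ) (a j) * Cv (ap j)) :=
    comm_sum _ _ _ pair1
  have keyR : (∑ j, (Bv (q:ℂ) (a j) * Cv (ap j) - Bv' (q:ℂ) (ap j) * Cv (a j))) * (∑ j, Bv (q:ℂ) (a j) * Bv' (q:ℂ) (ap j)) - (∑ j, Bv (q:ℂ) (a j) * Bv' (q:ℂ) (ap j)) * (∑ j, (Bv (q:ℂ) (a j) * Cv (ap j) - Bv' (q:ℂ) (ap j) * Cv (a j))) =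
      ∑ j, -((2:ℂ) • (Bv (q:ℂ) (a j) * Bv' (q:ℂ) (ap j))) := by
    refine comm_sum _ _ _ (fun j k => ?_)
    have expand : (Bv (q:ℂ) (a j) * Cv (ap j) - Bv' (q:ℂ) (ap j) * Cv (a j)) * (Bv (q:ℂ) (a k) * Bv' (q:ℂ) (ap k)) - (Bv (q:ℂ) (a k) * Bv' (q:ℂ) (ap k)) * (Bv (q:ℂ) (a j) * Cv (ap j) - Bv' (q:ℂ) (ap j) * Cv (a j)) =
        ((Bv (q:ℂ) (a j) * Cv (ap j)) * (Bv (q:ℂ) (a k) * Bv' (q:ℂ) (ap k)) -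
          (Bv (q:ℂ) (a k) * Bv' (q:ℂ) (ap k)) * (Bv (q:ℂ) (a j) * Cv (ap j))) -
        ((Bv' (q:ℂ) (ap j) * Cv (a j)) * (Bv (q:ℂ) (a k) * Bv' (q:ℂ) (ap k)) -
          (Bv (q:ℂ) (a k) * Bv' (q:ℂ) (ap k)) * (Bv' (q:ℂ) (ap j) * Cv (a j))) := by exact gexp _ _ _
    rw [expand, pair2 j k, pair3 j k]
    by_cases h : j = k
    · subst h; simp [two_smul]; abel
    · simp [h]
  have keyL : (∑ j, (Bv (q:ℂ) (a j) * Cv (ap j) - Bv' (q:ℂ) (ap j) * Cv (a j))) * (∑ j, Cv (a j) * Cv (ap j)) - (∑ j, Cv (a j) * Cv (ap j)) * (∑ j, (Bv (q:ℂ) (a j) * Cv (ap j) - Bv' (q:ℂ) (ap j) * Cv (a j))) =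
      ∑ j, ((2:ℂ) • (Cv (a j) * Cv (ap j))) := by
    refine comm_sum _ _ _ (fun j k => ?_)
    have expand : (Bv (q:ℂ) (a j) * Cv (ap j) - Bv' (q:ℂ) (ap j) * Cv (a j)) * (Cv (a k) * Cv (ap k)) - (Cv (a k) * Cv (ap k)) * (Bv (q:ℂ) (a j) * Cv (ap j) - Bv' (q:ℂ) (ap j) * Cv (a j)) =
        ((Bv (q:ℂ) (a j) * Cv (ap j)) * (Cv (a k) * Cv (ap k)) -
          (Cv (a k) * Cv (ap k)) * (Bv (q:ℂ) (a j) * Cv (ap j))) -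
        ((Bv' (q:ℂ) (ap j) * Cv (a j)) * (Cv (a k) * Cv (ap k)) -
          (Cv (a k) * Cv (ap k)) * (Bv' (q:ℂ) (ap j) * Cv (a j))) := by exact gexp _ _ _
    rw [expand, pair4 j k, pair5 j k]
    by_cases h : j = k
    · subst h; simp [two_smul]; try abel
    · simp [h]
  have hsum1 : ∑ j, (Cv (a j) * Bv' (q:ℂ) (ap j) - Bv (q:ℂ) (a j) * Cv (ap j)) =
      -∑ j, (Bv (q:ℂ) (a j) * Cv (ap j) - Bv' (q:ℂ) (ap j) * Cv (a j)) + (d:ℂ) • 1 := by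
    have hj : ∀ j : Fin d, Cv (a j) * Bv' (q:ℂ) (ap j) - Bv (q:ℂ) (a j) * Cv (ap j) =
        -(Bv (q:ℂ) (a j) * Cv (ap j) - Bv' (q:ℂ) (ap j) * Cv (a j)) + 1 := by
      intro j
      have h1 := comm_C_B' (q:ℂ) (hccr j j) (hE1 j j)
      simp at h1
      rw [← h1]; abel
    rw [Finset.sum_congr rfl fun j _ => hj j, Finset.sum_add_distrib,
      Finset.sum_neg_distrib]
    congr 1
    simp only [Finset.sum_const, Finset.card_univ, Fintype.card_fin]
    exact (Nat.cast_smul_eq_nsmul ℂ d 1).symm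
  refine ⟨?_, ?_, ?_⟩
  · rw [hRsum, hLsum, hEsum]
    have expand : ∀ R L : Module.End ℂ W, R * -L - -L * R = -(R * L - L * R) := by
      exact gg1
    rw [expand, key1, hsum1]
  · rw [hEsum, hRsum]
    have e2 : ∑ j, -((2:ℂ) • (Bv (q:ℂ) (a j) * Bv' (q:ℂ) (ap j))) = -((2:ℂ) • ∑ j, Bv (q:ℂ) (a j) * Bv' (q:ℂ) (ap j)) := by
      rw [Finset.sum_neg_distrib, Finset.smul_sum]
    rw [e2] at keyR
    have keyR' : (∑ j, Bv (q:ℂ) (a j) * Bv' (q:ℂ) (ap j)) * (∑ j, (Bv (q:ℂ) (a j) * Cv (ap j) - Bv' (q:ℂ) (ap j) * Cv (a j))) - (∑ j, (Bv (q:ℂ) (a j) * Cv (ap j) - Bv' (q:ℂ) (ap j) * Cv (a j))) * (∑ j, Bv (q:ℂ) (a j) * Bv' (q:ℂ) (ap j)) =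
        (2:ℂ) • ∑ j, Bv (q:ℂ) (a j) * Bv' (q:ℂ) (ap j) := by
      rw [← neg_sub, keyR, neg_neg]
    have expand2 : ∀ F R G : Module.End ℂ W, (-F + G) * R - R * (-F + G) =
        (R * F - F * R) + (G * R - R * G) := by exact gg2
    rw [expand2]
    rw [show ((d:ℂ) • (1 : Module.End ℂ W)) * (∑ j, Bv (q:ℂ) (a j) * Bv' (q:ℂ) (ap j)) -
        (∑ j, Bv (q:ℂ) (a j) * Bv' (q:ℂ) (ap j)) * ((d:ℂ) • (1 : Module.End ℂ W)) = 0 from by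
      simp [smul_mul_assoc, mul_smul_comm]]
    rw [add_zero, keyR']
  · rw [hEsum, hLsum]
    have e3 : ∑ j, ((2:ℂ) • (Cv (a j) * Cv (ap j))) = (2:ℂ) • ∑ j, Cv (a j) * Cv (ap j) := by
      rw [Finset.smul_sum]
    rw [e3] at keyL
    have expand3 : ∀ F L G : Module.End ℂ W, (-F + G) * -L - -L * (-F + G) =
        (F * L - L * F) + (L * G - G * L) := by exact gg3
    rw [expand3]
    rw [show (∑ j, Cv (a j) * Cv (ap j)) * ((d:ℂ) • (1 : Module.End ℂ W)) -
        ((d:ℂ) • (1 : Module.End ℂ W)) * (∑ j, Cv (a j) * Cv (ap j)) = 0 from by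
      simp [smul_mul_assoc, mul_smul_comm]]
    rw [add_zero, keyL, smul_neg, neg_neg]
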